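/- arXiv:2208.03701 — 2 statements merged into one kernel-verified Lean document; each statement's English description precedes it below -/
import Mathlib

section
/- Let φ ∈ AC satisfy conditions (Z1)-(Z4) of the Zachrisson equation with unilateral constraints. Then for all t ∈ [0,T] and i ∈ S: |φ(t,i)| ≤ (M_g + M_h·(T-t))·e^{d·M_Q·(T-t)}, where M_g = sup|g|, M_h = sup|h|, M_Q = sup|Q_{i,j}|. -/
open Set MeasureTheory
open Filter Real Topology

/-- A real function is absolutely continuous on `[0,T]`. -/
def IsAC (T : ℝ) (φ : ℝ → ℝ) : Prop :=
  ∃ f : ℝ → ℝ, MeasureTheory.IntegrableOn f (Set.Icc 0 T) ∧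
    ∀ t ∈ Set.Icc 0 T, φ t = φ 0 + ∫ s in (0:ℝ)..t, f s


lemma ae_hasDerivAt_primitive {f : ℝ → ℝ} (hf : MeasureTheory.Integrable f) :
    ∀ᵐ x, HasDerivAt (fun t => ∫ s in (0:ℝ)..t, f s) (f x) x := by
  filter_upwards [IsUnifLocDoublingMeasure.ae_tendsto_average_norm_sub
    (μ := (volume : Measure ℝ)) hf.locallyIntegrable 1] with x hx
  set F : ℝ → ℝ := fun t => ∫ s in (0:ℝ)..t, f s with hF
  rw [hasDerivAt_iff_tendsto_slope]
  have δlim : Tendsto (fun y : ℝ => |y - x|) (𝓝[≠] x) (𝓝[>] 0) := by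
    apply tendsto_nhdsWithin_of_tendsto_nhds_of_eventually_within
    · have h1 : Tendsto (fun y : ℝ => |y - x|) (𝓝 x) (𝓝 |x - x|) :=
        ((continuous_id.sub continuous_const).abs.tendsto x)
      simpa using h1.mono_left nhdsWithin_le_nhds
    · filter_upwards [self_mem_nhdsWithin] with y hy
      simpa [abs_pos] using sub_ne_zero_of_ne hy
  have xmem : ∀ᶠ y : ℝ in 𝓝[≠] x, x ∈ Metric.closedBall x (1 * |y - x|) := by
    filter_upwards with y
    simp [abs_nonneg]
  have A := hx (fun _ => x) (fun y => |y - x|) δlim xmem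
  rw [tendsto_iff_norm_sub_tendsto_zero]
  have A2 : Tendsto (fun y : ℝ => 2 * ⨍ u in Metric.closedBall x |y - x|, ‖f u - f x‖)
      (𝓝[≠] x) (𝓝 0) := by simpa using A.const_mul 2
  refine squeeze_zero' ?_ ?_ A2
  · exact Filter.Eventually.of_forall fun y => norm_nonneg _
  · filter_upwards [self_mem_nhdsWithin] with y (hy : y ≠ x)
    have hyx : (0:ℝ) < |y - x| := abs_pos.mpr (sub_ne_zero_of_ne hy)
    -- slope F x y - f x = (y - x)⁻¹ • (F y - F x - (y-x) • f x)
    have hne : y - x ≠ 0 := sub_ne_zero_of_ne hy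
    have hslope : slope F x y - f x = (y - x)⁻¹ * (F y - F x - (y - x) * f x) := by
      rw [slope_def_field]
      field_simp
    have hFF : F y - F x = ∫ s in x..y, f s := by
      rw [hF]
      simp only
      rw [← intervalIntegral.integral_add_adjacent_intervals (a := 0) (b := x) (c := y)
        hf.intervalIntegrable hf.intervalIntegrable]
      ring
    have hconst : (y - x) * f x = ∫ s in x..y, f x := by
      simp [intervalIntegral.integral_const, smul_eq_mul]
    have hdiff : F y - F x - (y - x) * f x = ∫ s in x..y, (f s - f x) := by
      rw [hFF, hconst, intervalIntegral.integral_sub hf.intervalIntegrable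
        intervalIntegrable_const]
    have hsub : Set.uIoc x y ⊆ Metric.closedBall x |y - x| := by
      intro u hu
      rw [Metric.mem_closedBall, Real.dist_eq]
      rcases le_total x y with h | h
      · rw [uIoc_of_le h] at hu
        obtain ⟨h1u, h2u⟩ := hu
        rw [abs_of_nonneg (sub_nonneg.mpr h), abs_le]
        constructor <;> linarith
      · rw [uIoc_of_ge h] at hu
        obtain ⟨h1u, h2u⟩ := hu
        rw [abs_of_nonpos (sub_nonpos.mpr h), abs_le]
        constructor <;> linarith
    have hintcb : IntegrableOn (fun u => ‖f u - f x‖) (Metric.closedBall x |y - x|) := by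
      exact ((hf.integrableOn).sub (integrableOn_const
        ((by simp [Real.volume_closedBall, ENNReal.mul_eq_top])))).norm
    have h1 : ‖F y - F x - (y - x) * f x‖ ≤ ∫ u in Metric.closedBall x |y - x|, ‖f u - f x‖ := by
      rw [hdiff]
      calc ‖∫ s in x..y, (f s - f x)‖
          ≤ ∫ u in Set.uIoc x y, ‖f u - f x‖ := intervalIntegral.norm_integral_le_integral_norm_uIoc
        _ ≤ ∫ u in Metric.closedBall x |y - x|, ‖f u - f x‖ := by
            apply setIntegral_mono_set hintcb
            · exact Filter.Eventually.of_forall fun u => norm_nonneg _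
            · exact HasSubset.Subset.eventuallyLE hsub
    have hvol : (volume (Metric.closedBall x |y - x|)).toReal = 2 * |y - x| := by
      rw [Real.volume_closedBall]
      rw [ENNReal.toReal_ofReal (by positivity)]
    have h2 : ∫ u in Metric.closedBall x |y - x|, ‖f u - f x‖
        = 2 * |y - x| * ⨍ u in Metric.closedBall x |y - x|, ‖f u - f x‖ := by
      rw [setAverage_eq, smul_eq_mul, measureReal_def, hvol]
      rw [← mul_assoc, mul_inv_cancel₀ (by positivity), one_mul]
    calc ‖slope F x y - f x‖ = |y - x|⁻¹ * ‖F y - F x - (y - x) * f x‖ := by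
          rw [hslope]; simp [abs_mul, abs_inv, abs_abs]
        _ ≤ |y - x|⁻¹ * (2 * |y - x| * ⨍ u in Metric.closedBall x |y - x|, ‖f u - f x‖) := by
          rw [← h2]; exact mul_le_mul_of_nonneg_left h1 (by positivity)
        _ = 2 * ⨍ u in Metric.closedBall x |y - x|, ‖f u - f x‖ := by
          field_simp

/-- a priori bound for solutions of the Zachrisson equation with
unilateral constraints: `|φ(t,i)| ≤ (M_g + M_h(T-t))·e^{d·M_Q·(T-t)}`. -/
theorem zachrisson_apriori_bound {d : ℕ} [NeZero d] {T MQ Mh Mg : ℝ} (hT : 0 ≤ T)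
    (H : Fin d → ℝ → (Fin d → ℝ) → ℝ) (g : ℝ → Fin d → ℝ) (φ : ℝ → Fin d → ℝ)
    (hH : ∀ i t w, |H i t w| ≤ (d : ℝ) * MQ * (⨆ j, |w j|) + Mh)
    (hMg : ∀ t ∈ Icc 0 T, ∀ i, |g t i| ≤ Mg)
    (hAC : ∀ i, IsAC T (fun t => φ t i))
    (hZ1 : ∀ i, φ T i = g T i)
    (hZ2 : ∀ t ∈ Icc 0 T, ∀ i, φ t i ≤ g t i)
    (hZ3 : ∀ t ∈ Icc 0 T, ∀ i, ∀ D : ℝ, HasDerivAt (fun s => φ s i) D t →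
      φ t i < g t i → D ≤ -(H i t (φ t)))
    (hZ4 : ∀ t ∈ Icc 0 T, ∀ i, ∀ D : ℝ, HasDerivAt (fun s => φ s i) D t →
      -(H i t (φ t)) ≤ D) :
    ∀ t ∈ Icc 0 T, ∀ i,
      |φ t i| ≤ (Mg + Mh * (T - t)) * Real.exp ((d : ℝ) * MQ * (T - t)) := by
  have hd : 0 < d := Nat.pos_of_ne_zero (NeZero.ne d)
  haveI : Nonempty (Fin d) := ⟨⟨0, hd⟩⟩
  set a : ℝ := (d : ℝ) * MQ with ha_def
  have hTmem : T ∈ Icc (0:ℝ) T := ⟨hT, le_rfl⟩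
  have hMg0 : 0 ≤ Mg :=
    le_trans (abs_nonneg _) (hMg T hTmem (Classical.arbitrary _))
  have hsup0 : (⨆ j : Fin d, |(0:ℝ)|) = 0 := by simp
  have hMh0 : 0 ≤ Mh := by
    have h1 := hH (Classical.arbitrary _) 0 (fun _ => 0)
    rw [hsup0] at h1
    have h2 := abs_nonneg (H (Classical.arbitrary _) 0 (fun _ => 0))
    linarith
  have ha0 : (0:ℝ) ≤ a := by
    by_contra hneg
    push_neg at hneg
    set n : ℝ := (Mh + 1) / (-a) with hn_def
    have hnpos : 0 < n := div_pos (by linarith) (by linarith)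
    have hna : (-a) ≠ 0 := by intro h; rw [neg_eq_zero] at h; exact absurd h (ne_of_lt hneg)
    have han : a * n = -(Mh + 1) := by
      calc a * n = -(n * (-a)) := by ring
        _ = -(Mh + 1) := by rw [hn_def, div_mul_cancel₀ _ hna]
    have h1 := hH (Classical.arbitrary _) 0 (fun _ => n)
    have hsupn : (⨆ _ : Fin d, |n|) = n := by
      rw [ciSup_const, abs_of_pos hnpos]
    rw [hsupn] at h1
    have h2 := abs_nonneg (H (Classical.arbitrary _) 0 (fun _ => n))
    rw [han] at h1
    linarith
  -- extract densities
  choose f hfint hfeq using hAC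
  set f' : Fin d → ℝ → ℝ := fun i => (Icc 0 T).indicator (f i) with hf'_def
  have hint' : ∀ i, Integrable (f' i) := fun i =>
    (hfint i).integrable_indicator measurableSet_Icc
  have heq' : ∀ i, ∀ t ∈ Icc (0:ℝ) T, φ t i = φ 0 i + ∫ s in (0:ℝ)..t, f' i s := by
    intro i t ht
    have h1 := hfeq i t ht
    simp only at h1
    rw [h1]
    congr 1
    apply (intervalIntegral.integral_congr _).symm
    intro s hs
    rw [uIcc_of_le ht.1] at hs
    have hmem : s ∈ Icc (0:ℝ) T := ⟨hs.1, hs.2.trans ht.2⟩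
    simp only [hf'_def]
    rw [Set.indicator_of_mem hmem]
  set F : Fin d → ℝ → ℝ := fun i t => φ 0 i + ∫ s in (0:ℝ)..t, f' i s with hF_def
  have hFcont : ∀ i, Continuous (F i) := fun i =>
    continuous_const.add (intervalIntegral.continuous_primitive
      (fun p q => (hint' i).intervalIntegrable) 0)
  have hφcont : ∀ i, ContinuousOn (fun t => φ t i) (Icc 0 T) := fun i =>
    ((hFcont i).continuousOn).congr (fun t ht => heq' i t ht)
  -- a.e. derivative
  have hderiv : ∀ᵐ s : ℝ, ∀ i, s ∈ Ioo 0 T → HasDerivAt (fun r => φ r i) (f' i s) s := by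
    rw [ae_all_iff]
    intro i
    filter_upwards [ae_hasDerivAt_primitive (hint' i)] with s hs hsIoo
    have h1 : HasDerivAt (F i) (f' i s) s := hs.const_add (φ 0 i)
    apply h1.congr_of_eventuallyEq
    filter_upwards [Icc_mem_nhds hsIoo.1 hsIoo.2] with r hr
    exact heq' i r hr
  -- the sup function
  set u : ℝ → ℝ := fun t => ⨆ j, |φ t j| with hu_def
  have hu_ge : ∀ t j, |φ t j| ≤ u t := fun t j =>
    le_ciSup (f := fun j => |φ t j|) (Set.Finite.bddAbove (Set.finite_range _)) j
  have hu0 : ∀ t, 0 ≤ u t := fun t =>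
    le_trans (abs_nonneg _) (hu_ge t (Classical.arbitrary _))
  have hucont : ContinuousOn u (Icc 0 T) := by
    have hrepr : ∀ t : ℝ, u t = Finset.univ.sup' Finset.univ_nonempty (fun j => |φ t j|) :=
      fun t => (Finset.sup'_univ_eq_ciSup _).symm
    have hsup : ContinuousOn
        (fun t => Finset.univ.sup' Finset.univ_nonempty (fun j => |φ t j|)) (Icc 0 T) := by
      intro x hx
      exact Filter.Tendsto.finset_sup'_nhds_apply Finset.univ_nonempty
        (fun j _ => (hφcont j x hx).abs)
    exact hsup.congr (fun t _ => hrepr t)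
  have huI : IntegrableOn u (Icc 0 T) := hucont.integrableOn_Icc
  have huII : ∀ {p q : ℝ}, p ∈ Icc (0:ℝ) T → q ∈ Icc (0:ℝ) T →
      IntervalIntegrable u volume p q := fun hp hq =>
    (huI.mono_set (uIcc_subset_Icc hp hq)).intervalIntegrable
  have hintc : ∀ {p q : ℝ}, p ∈ Icc (0:ℝ) T → q ∈ Icc (0:ℝ) T →
      IntervalIntegrable (fun s => a * u s + Mh) volume p q := fun hp hq =>
    ((huII hp hq).const_mul a).add intervalIntegrable_const
  set R : ℝ → ℝ := fun t => ∫ s in t..T, u s with hR_def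
  have hbound : ∀ s, 0 ≤ a * u s + Mh := fun s =>
    add_nonneg (mul_nonneg ha0 (hu0 s)) hMh0
  -- the key integral inequality
  have key : ∀ t ∈ Icc (0:ℝ) T, u t ≤ (Mg + Mh * (T - t)) + a * R t := by
    intro t ht
    have htT : t ≤ T := ht.2
    have hR0 : 0 ≤ R t := intervalIntegral.integral_nonneg htT (fun s _ => hu0 s)
    have hval : ∫ s in t..T, (a * u s + Mh) = a * R t + Mh * (T - t) := by
      rw [intervalIntegral.integral_add ((huII ht hTmem).const_mul a) intervalIntegrable_const,
        intervalIntegral.integral_const_mul, intervalIntegral.integral_const]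
      simp only [smul_eq_mul]
      ring
    apply ciSup_le
    intro i
    rw [abs_le]
    have hgub : g t i ≤ Mg := (le_abs_self _).trans (hMg t ht i)
    constructor
    · -- lower bound via the contact argument
      set A : Set ℝ := {s | s ∈ Icc t T ∧ g s i ≤ φ s i} with hA_def
      have hTA : T ∈ A := ⟨⟨htT, le_rfl⟩, (hZ1 i).ge⟩
      have hAne : A.Nonempty := ⟨T, hTA⟩
      have hAbdd : BddBelow A := ⟨t, fun s hs => hs.1.1⟩
      set σ : ℝ := sInf A with hσ_def
      have hσcl : σ ∈ {s | s ∈ Icc t T ∧ -Mg ≤ φ s i} := by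
        have hclosed : IsClosed {s | s ∈ Icc t T ∧ -Mg ≤ φ s i} := by
          have hc : ContinuousOn (fun s => φ s i) (Icc t T) :=
            (hφcont i).mono (Icc_subset_Icc ht.1 le_rfl)
          have := hc.preimage_isClosed_of_isClosed isClosed_Icc (isClosed_Ici (a := -Mg))
          exact this
        have hsub : A ⊆ {s | s ∈ Icc t T ∧ -Mg ≤ φ s i} := by
          rintro s ⟨hs1, hs2⟩
          have hsT : s ∈ Icc (0:ℝ) T := ⟨ht.1.trans hs1.1, hs1.2⟩
          have heqg : φ s i = g s i := le_antisymm (hZ2 s hsT i) hs2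
          refine ⟨hs1, ?_⟩
          rw [heqg]
          exact neg_le_of_abs_le (hMg s hsT i)
        have h1 : σ ∈ closure A := csInf_mem_closure hAne hAbdd
        exact hclosed.closure_subset ((closure_mono hsub) h1)
      obtain ⟨hσIcc, hσMg⟩ := hσcl
      have htσ : t ≤ σ := hσIcc.1
      have hσ0T : σ ∈ Icc (0:ℝ) T := ⟨ht.1.trans htσ, hσIcc.2⟩
      have hdiffint : φ σ i - φ t i = ∫ s in t..σ, f' i s := by
        rw [heq' i σ hσ0T, heq' i t ht,
          ← intervalIntegral.integral_add_adjacent_intervals (a := (0:ℝ)) (b := t) (c := σ)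
            (hint' i).intervalIntegrable (hint' i).intervalIntegrable]
        ring
      have hae : (f' i) ≤ᶠ[ae (volume.restrict (Icc t σ))] fun s => a * u s + Mh := by
        have hnull : ∀ᵐ s : ℝ, s ∉ ({t, σ} : Set ℝ) :=
          measure_eq_zero_iff_ae_notMem.mp (((Set.finite_singleton σ).insert t).measure_zero _)
        have hglob : ∀ᵐ s : ℝ, s ∈ Ioo t σ → f' i s ≤ a * u s + Mh := by
          filter_upwards [hderiv] with s hs hsIoo
          have hs0T : s ∈ Ioo (0:ℝ) T :=
            ⟨lt_of_le_of_lt ht.1 hsIoo.1, lt_of_lt_of_le hsIoo.2 hσIcc.2⟩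
          have hsIcc : s ∈ Icc (0:ℝ) T := ⟨hs0T.1.le, hs0T.2.le⟩
          have hD := hs i hs0T
          have hlt : φ s i < g s i := by
            by_contra hge
            push_neg at hge
            have hsA : s ∈ A := ⟨⟨hsIoo.1.le, hsIoo.2.le.trans hσIcc.2⟩, hge⟩
            exact absurd (csInf_le hAbdd hsA) (not_le.mpr hsIoo.2)
          calc f' i s ≤ -(H i s (φ s)) := hZ3 s hsIcc i _ hD hlt
            _ ≤ |H i s (φ s)| := neg_le_abs _
            _ ≤ (d : ℝ) * MQ * (⨆ j, |φ s j|) + Mh := hH i s (φ s)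
            _ = a * u s + Mh := rfl
        filter_upwards [ae_restrict_mem measurableSet_Icc, ae_restrict_of_ae hglob,
          ae_restrict_of_ae hnull] with s hs1 hs2 hs3
        apply hs2
        simp only [Set.mem_insert_iff, Set.mem_singleton_iff, not_or] at hs3
        exact ⟨lt_of_le_of_ne hs1.1 (Ne.symm hs3.1), lt_of_le_of_ne hs1.2 hs3.2⟩
      have h5 : ∫ s in t..σ, f' i s ≤ ∫ s in t..σ, (a * u s + Mh) :=
        intervalIntegral.integral_mono_ae_restrict htσ (hint' i).intervalIntegrable
          (hintc ht hσ0T) hae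
      have h6 : ∫ s in t..σ, (a * u s + Mh) ≤ ∫ s in t..T, (a * u s + Mh) := by
        rw [← intervalIntegral.integral_add_adjacent_intervals (a := t) (b := σ) (c := T)
          (hintc ht hσ0T) (hintc hσ0T hTmem)]
        have h7 : 0 ≤ ∫ s in σ..T, (a * u s + Mh) :=
          intervalIntegral.integral_nonneg hσIcc.2 (fun s _ => hbound s)
        linarith
      rw [hval] at h6
      linarith
    · linarith [hZ2 t ht i, mul_nonneg ha0 hR0,
        mul_nonneg hMh0 (sub_nonneg.2 htT)]
  -- Gronwall
  set c : ℝ → ℝ := fun s => Mg + Mh * (T - s) with hc_def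
  have hccont : Continuous c := by fun_prop
  have hc0 : ∀ s ∈ Icc (0:ℝ) T, 0 ≤ c s := fun s hs =>
    add_nonneg hMg0 (mul_nonneg hMh0 (by linarith [hs.2]))
  set u' : ℝ → ℝ := (Icc 0 T).indicator u with hu'_def
  have hu'I : Integrable u' := huI.integrable_indicator measurableSet_Icc
  set P : ℝ → ℝ := fun t => ∫ s in (0:ℝ)..t, u' s with hP_def
  have hPcont : Continuous P :=
    intervalIntegral.continuous_primitive (fun p q => hu'I.intervalIntegrable) 0
  have hPR : ∀ t ∈ Icc (0:ℝ) T, P T - P t = R t := by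
    intro t ht
    have h1 : ∀ {p q : ℝ}, p ∈ Icc (0:ℝ) T → q ∈ Icc (0:ℝ) T →
        (∫ s in p..q, u' s) = ∫ s in p..q, u s := by
      intro p q hp hq
      apply intervalIntegral.integral_congr
      intro s hs
      exact Set.indicator_of_mem (uIcc_subset_Icc hp hq hs) u
    have h2 : P t + ∫ s in t..T, u' s = P T :=
      intervalIntegral.integral_add_adjacent_intervals
        hu'I.intervalIntegrable hu'I.intervalIntegrable
    show P T - P t = ∫ s in t..T, u s
    rw [← h1 ht hTmem]
    linarith
  have hexp : ∀ t : ℝ, HasDerivAt (fun s => Real.exp (a * s)) (a * Real.exp (a * t)) t := by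
    intro t
    have h1 : HasDerivAt (fun s : ℝ => a * s) a t := by
      simpa using (hasDerivAt_id t).const_mul a
    have h2 := (Real.hasDerivAt_exp (a * t)).comp t h1
    have h3 : HasDerivAt (fun s => Real.exp (a * s)) (Real.exp (a * t) * a) t := h2
    simpa [mul_comm] using h3
  set h : ℝ → ℝ := fun t => (P T - P t) * Real.exp (a * t) +
    ∫ s in (0:ℝ)..t, c s * Real.exp (a * s) with hh_def
  have hcexp_cont : Continuous fun s => c s * Real.exp (a * s) := by fun_prop
  have hcexpII : ∀ p q : ℝ, IntervalIntegrable (fun s => c s * Real.exp (a * s)) volume p q :=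
    fun p q => hcexp_cont.intervalIntegrable p q
  have hhder : ∀ t ∈ Ioo (0:ℝ) T, HasDerivAt h
      ((-(u t)) * Real.exp (a * t) + (P T - P t) * (a * Real.exp (a * t))
        + c t * Real.exp (a * t)) t := by
    intro t htIoo
    have htIcc : t ∈ Icc (0:ℝ) T := ⟨htIoo.1.le, htIoo.2.le⟩
    have hu'cont : ContinuousAt u' t := by
      have h1 : ContinuousAt u t := hucont.continuousAt (Icc_mem_nhds htIoo.1 htIoo.2)
      apply h1.congr
      filter_upwards [Icc_mem_nhds htIoo.1 htIoo.2] with r hr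
      exact (Set.indicator_of_mem hr u).symm
    have hPder : HasDerivAt P (u t) t := by
      have h1 : HasDerivAt P (u' t) t :=
        intervalIntegral.integral_hasDerivAt_right hu'I.intervalIntegrable
          ⟨univ, univ_mem, hu'I.aestronglyMeasurable.restrict⟩ hu'cont
      rwa [show u' t = u t from Set.indicator_of_mem htIcc u] at h1
    have h2 : HasDerivAt (fun s => P T - P s) (-(u t)) t :=
      hPder.const_sub (P T)
    have h3 : HasDerivAt (fun s => (P T - P s) * Real.exp (a * s))
        ((-(u t)) * Real.exp (a * t) + (P T - P t) * (a * Real.exp (a * t))) t :=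
      h2.mul (hexp t)
    have h4 : HasDerivAt (fun r => ∫ s in (0:ℝ)..r, c s * Real.exp (a * s))
        (c t * Real.exp (a * t)) t :=
      intervalIntegral.integral_hasDerivAt_right (hcexpII 0 t)
        ⟨univ, univ_mem, hcexp_cont.aestronglyMeasurable.restrict⟩ hcexp_cont.continuousAt
    exact h3.add h4
  have hhmono : MonotoneOn h (Icc 0 T) := by
    apply monotoneOn_of_deriv_nonneg (convex_Icc 0 T)
    · apply Continuous.continuousOn
      apply Continuous.add
      · exact (continuous_const.sub hPcont).mul (by fun_prop)
      · exact intervalIntegral.continuous_primitive (fun p q => hcexpII p q) 0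
    · intro t ht
      rw [interior_Icc] at ht
      exact ((hhder t ht).differentiableAt).differentiableWithinAt
    · intro t ht
      rw [interior_Icc] at ht
      rw [(hhder t ht).deriv]
      have htIcc : t ∈ Icc (0:ℝ) T := ⟨ht.1.le, ht.2.le⟩
      have hk := key t htIcc
      rw [← hPR t htIcc] at hk
      have hexppos : 0 < Real.exp (a * t) := Real.exp_pos _
      have : (-(u t)) * Real.exp (a * t) + (P T - P t) * (a * Real.exp (a * t))
          + c t * Real.exp (a * t)
          = (c t + a * (P T - P t) - u t) * Real.exp (a * t) := by ring
      rw [this]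
      apply mul_nonneg _ hexppos.le
      rw [hc_def]
      simp only
      linarith
  -- conclude
  intro t ht i
  have htT : t ≤ T := ht.2
  have hle : h t ≤ h T := hhmono ht hTmem htT
  have hhT : h T = ∫ s in (0:ℝ)..T, c s * Real.exp (a * s) := by
    rw [hh_def]; simp
  have hsplit : (∫ s in (0:ℝ)..T, c s * Real.exp (a * s))
      - ∫ s in (0:ℝ)..t, c s * Real.exp (a * s)
      = ∫ s in t..T, c s * Real.exp (a * s) := by
    rw [← intervalIntegral.integral_add_adjacent_intervals (a := (0:ℝ)) (b := t) (c := T)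
      (hcexpII 0 t) (hcexpII t T)]
    ring
  have hRt : R t * Real.exp (a * t) ≤ ∫ s in t..T, c s * Real.exp (a * s) := by
    have := hle
    rw [hh_def] at this
    simp only at this
    rw [hPR t ht] at this
    have hPT : P T - P T = 0 := by ring
    nlinarith [hsplit]
  have hmono2 : ∫ s in t..T, c s * Real.exp (a * s) ≤ ∫ s in t..T, c t * Real.exp (a * s) := by
    apply intervalIntegral.integral_mono_on htT (hcexpII t T)
      ((continuous_const.mul (by fun_prop)).intervalIntegrable t T)
    intro s hs
    apply mul_le_mul_of_nonneg_right _ (Real.exp_pos _).le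
    rw [hc_def]
    simp only
    nlinarith [hs.1, hMh0]
  have hintexp : ∫ s in t..T, a * Real.exp (a * s) = Real.exp (a * T) - Real.exp (a * t) := by
    apply intervalIntegral.integral_eq_sub_of_hasDerivAt
    · intro s _
      exact hexp s
    · exact (continuous_const.mul (by fun_prop)).intervalIntegrable t T
  have hcpull : ∫ s in t..T, c t * Real.exp (a * s) = c t * ∫ s in t..T, Real.exp (a * s) :=
    intervalIntegral.integral_const_mul _ _
  have hapull : ∫ s in t..T, a * Real.exp (a * s) = a * ∫ s in t..T, Real.exp (a * s) :=
    intervalIntegral.integral_const_mul _ _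
  -- combine: a * R t ≤ c t * (exp (a*(T-t)) - 1)
  have hexpat : 0 < Real.exp (a * t) := Real.exp_pos _
  have hexpTt : Real.exp (a * T) = Real.exp (a * (T - t)) * Real.exp (a * t) := by
    rw [← Real.exp_add]; ring_nf
  have hEnn : 0 ≤ ∫ s in t..T, Real.exp (a * s) :=
    intervalIntegral.integral_nonneg htT (fun s _ => (Real.exp_pos _).le)
  have hct0 : 0 ≤ c t := hc0 t ht
  have h8 : a * (R t * Real.exp (a * t)) ≤ c t * (Real.exp (a * T) - Real.exp (a * t)) := by
    calc a * (R t * Real.exp (a * t)) ≤ a * ∫ s in t..T, c s * Real.exp (a * s) :=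
          mul_le_mul_of_nonneg_left hRt ha0
      _ ≤ a * ∫ s in t..T, c t * Real.exp (a * s) := mul_le_mul_of_nonneg_left hmono2 ha0
      _ = c t * (a * ∫ s in t..T, Real.exp (a * s)) := by rw [hcpull]; ring
      _ = c t * (Real.exp (a * T) - Real.exp (a * t)) := by rw [← hapull, hintexp]
  have h9 : a * R t ≤ c t * (Real.exp (a * (T - t)) - 1) := by
    have h10 : (a * R t) * Real.exp (a * t)
        ≤ (c t * (Real.exp (a * (T - t)) - 1)) * Real.exp (a * t) := by
      calc (a * R t) * Real.exp (a * t) = a * (R t * Real.exp (a * t)) := by ring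
        _ ≤ c t * (Real.exp (a * T) - Real.exp (a * t)) := h8
        _ = (c t * (Real.exp (a * (T - t)) - 1)) * Real.exp (a * t) := by
            rw [hexpTt]; ring
    exact le_of_mul_le_mul_right h10 hexpat
  have hfin : u t ≤ c t * Real.exp (a * (T - t)) := by
    have hk := key t ht
    have : c t * Real.exp (a * (T - t)) = c t + c t * (Real.exp (a * (T - t)) - 1) := by ring
    rw [this]
    rw [hc_def]
    simp only
    rw [hc_def] at h9
    simp only at h9
    linarith
  calc |φ t i| ≤ u t := hu_ge t i
    _ ≤ c t * Real.exp (a * (T - t)) := hfin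
    _ = (Mg + Mh * (T - t)) * Real.exp ((d : ℝ) * MQ * (T - t)) := by rw [hc_def, ha_def]
end

section
/- There exists a constant C_4, depending only on M_g, M_h, M_Q, L_g, d, T, such that for every N, every s, r ∈ [0,T] with s < r, and every i ∈ S: φ_N(r,i) - φ_N(s,i) ≥ -∫_s^r H_i(t, φ_N(t)) dt - C_4/N. -/
open Set


lemma my_exp_aux {y : ℝ} (hy : 0 ≤ y) : Real.exp y - 1 ≤ y * Real.exp y := by
  have h := Real.add_one_le_exp (-y)
  have hp := Real.exp_pos y
  have h2 : (-y + 1) * Real.exp y ≤ Real.exp (-y) * Real.exp y :=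
    mul_le_mul_of_nonneg_right h hp.le
  rw [← Real.exp_add, neg_add_cancel, Real.exp_zero] at h2
  nlinarith [h2]

lemma my_gronwallBound_le {δ K ε x : ℝ} (hK : 0 ≤ K) (hε : 0 ≤ ε) (hx : 0 ≤ x) :
    gronwallBound δ K ε x ≤ (δ + ε * x) * Real.exp (K * x) := by
  rcases eq_or_lt_of_le hK with h | h
  · rw [← h, gronwallBound_K0]
    simp only [zero_mul, Real.exp_zero, mul_one]
    exact le_rfl
  · rw [gronwallBound_of_K_ne_0 h.ne']
    have h1 : Real.exp (K * x) - 1 ≤ (K * x) * Real.exp (K * x) :=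
      my_exp_aux (by positivity)
    have h2 := Real.exp_pos (K * x)
    have h3 : ε / K * (Real.exp (K * x) - 1) ≤ ε * x * Real.exp (K * x) := by
      rw [div_mul_eq_mul_div, div_le_iff₀ h]
      nlinarith
    nlinarith

lemma my_gronwall_backward {E : Type*} [NormedAddCommGroup E] [NormedSpace ℝ E]
    {f f' : ℝ → E} {K ε δ : ℝ} (hK : 0 ≤ K) (hε : 0 ≤ ε) {a b : ℝ}
    (hf : ∀ t ∈ Icc a b, HasDerivAt f (f' t) t)
    (hbound : ∀ t ∈ Icc a b, ‖f' t‖ ≤ K * ‖f t‖ + ε)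
    (hδ : ‖f b‖ ≤ δ) :
    ∀ t ∈ Icc a b, ‖f t‖ ≤ (δ + ε * (b - t)) * Real.exp (K * (b - t)) := by
  intro t ht
  have hab : a ≤ b := le_trans ht.1 ht.2
  have hmem : ∀ u ∈ Icc (0:ℝ) (b - a), b - u ∈ Icc a b := by
    intro u hu; exact ⟨by linarith [hu.2], by linarith [hu.1]⟩
  have hFc : ContinuousOn (fun u => f (b - u)) (Icc (0:ℝ) (b - a)) := by
    intro u hu
    exact ((hf (b - u) (hmem u hu)).continuousAt.comp
      ((continuous_const.sub continuous_id).continuousAt)).continuousWithinAt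
  have hFd : ∀ u ∈ Ico (0:ℝ) (b - a),
      HasDerivWithinAt (fun u => f (b - u)) (-f' (b - u)) (Ici u) u := by
    intro u hu
    have hm : b - u ∈ Icc a b := hmem u ⟨hu.1, hu.2.le⟩
    exact ((hf (b - u) hm).comp_const_sub b u).hasDerivWithinAt
  have h0 : ‖(fun u => f (b - u)) 0‖ ≤ δ := by simpa using hδ
  have hFb : ∀ u ∈ Ico (0:ℝ) (b - a),
      ‖-f' (b - u)‖ ≤ K * ‖(fun u => f (b - u)) u‖ + ε := by
    intro u hu
    rw [norm_neg]
    exact hbound _ (hmem u ⟨hu.1, hu.2.le⟩)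
  have key := norm_le_gronwallBound_of_norm_deriv_right_le hFc hFd h0 hFb
    (b - t) ⟨by linarith [ht.2], by linarith [ht.1]⟩
  simp only [sub_sub_cancel, sub_zero] at key
  exact key.trans (my_gronwallBound_le hK hε (by linarith [ht.2]))

lemma my_abs_le_norm {d : ℕ} (w : Fin d → ℝ) (j : Fin d) : |w j| ≤ ‖w‖ := by
  rw [← Real.norm_eq_abs]; exact norm_le_pi_norm w j

lemma my_sup_eq_norm {d : ℕ} [NeZero d] (w : Fin d → ℝ) : (⨆ j, |w j|) = ‖w‖ := by
  haveI : Nonempty (Fin d) := Fin.pos_iff_nonempty.mp (Nat.pos_of_ne_zero (NeZero.ne d))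
  apply le_antisymm
  · exact ciSup_le fun j => my_abs_le_norm w j
  · have h0 : 0 ≤ ⨆ j, |w j| :=
      le_ciSup_of_le (Set.Finite.bddAbove (Set.finite_range _)) (Classical.arbitrary _)
        (abs_nonneg _)
    refine (pi_norm_le_iff_of_nonneg h0).2 fun j => ?_
    rw [Real.norm_eq_abs]
    exact le_ciSup (f := fun j => |w j|) (Set.Finite.bddAbove (Set.finite_range _)) j

set_option maxHeartbeats 1000000 in
/-- Lemma 5, approximate v-stability: there is a constant `C₄`
depending only on the data such that
`φ_N(r,i) - φ_N(s,i) ≥ -∫_s^r H_i(t,φ_N(t)) dt - C₄/N` for all `N`, `s < r`, `i`. -/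
theorem scheme_v_stability {d : ℕ} [NeZero d] {T MQ Mh Mg Lg : ℝ} (hT : 0 ≤ T)
    (H : Fin d → ℝ → (Fin d → ℝ) → ℝ) (g : ℝ → Fin d → ℝ)
    (hHc : ∀ i, Continuous fun p : ℝ × (Fin d → ℝ) => H i p.1 p.2)
    (hH : ∀ i t w, |H i t w| ≤ (d : ℝ) * MQ * (⨆ j, |w j|) + Mh)
    (hHlip : ∀ i t (w w' : Fin d → ℝ),
      |H i t w - H i t w'| ≤ (d : ℝ) * MQ * (⨆ j, |w j - w' j|))
    (hMg : ∀ t ∈ Icc 0 T, ∀ i, |g t i| ≤ Mg)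
    (hLg : ∀ i, ∀ s r : ℝ, |g s i - g r i| ≤ Lg * |s - r|) :
    ∃ C4 : ℝ, ∀ (N : ℕ), 0 < N → ∀ (φ : ℝ → Fin d → ℝ) (ψ : ℕ → ℝ → Fin d → ℝ),
      (∀ i, φ T i = g T i) →
      (∀ k < N, ∀ t ∈ Icc (T * k / N) (T * (k + 1) / N), ∀ i,
        HasDerivAt (fun s => ψ k s i) (-(H i t (ψ k t))) t) →
      (∀ k < N, ∀ i, ψ k (T * (k + 1) / N) i = φ (T * (k + 1) / N) i) →
      (∀ k < N, ∀ t ∈ Icc (T * k / N) (T * (k + 1) / N), ∀ i,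
        φ t i = min (ψ k t i) (g t i)) →
      ∀ s ∈ Icc 0 T, ∀ r ∈ Icc 0 T, s < r → ∀ i,
        φ r i - φ s i ≥ -(∫ t in s..r, H i t (φ t)) - C4 / N := by
  classical
  have hd : 0 < d := Nat.pos_of_ne_zero (NeZero.ne d)
  haveI : Nonempty (Fin d) := Fin.pos_iff_nonempty.mp hd
  have i0 : Fin d := Classical.arbitrary _
  have hMg0 : 0 ≤ Mg := le_trans (abs_nonneg _) (hMg 0 (left_mem_Icc.2 hT) i0)
  set K : ℝ := max ((d : ℝ) * MQ) 0 with hKdef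
  set E : ℝ := max Mh 0 with hEdef
  have hK0 : 0 ≤ K := le_max_right _ _
  have hE0 : 0 ≤ E := le_max_right _ _
  have hMhE : Mh ≤ E := le_max_left _ _
  have hdK : (d : ℝ) * MQ ≤ K := le_max_left _ _
  set B : ℝ := (Mg + E * T) * Real.exp (K * T) with hBdef
  have hB0 : 0 ≤ B := by
    rw [hBdef]
    exact mul_nonneg (by nlinarith [mul_nonneg hE0 hT]) (Real.exp_pos _).le
  have hMgB : Mg ≤ B := by
    rw [hBdef]
    nlinarith [mul_nonneg (add_nonneg hMg0 (mul_nonneg hE0 hT))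
      (sub_nonneg.2 (Real.one_le_exp (mul_nonneg hK0 hT))), mul_nonneg hE0 hT]
  set C1 : ℝ := K * B + E with hC1def
  have hC10 : 0 ≤ C1 := by rw [hC1def]; exact add_nonneg (mul_nonneg hK0 hB0) hE0
  set LG : ℝ := max Lg 0 with hLGdef
  have hLG0 : 0 ≤ LG := le_max_right _ _
  set C3 : ℝ := max C1 LG with hC3def
  have hC30 : 0 ≤ C3 := le_trans hC10 (le_max_left _ _)
  have hC13 : C1 ≤ C3 := le_max_left _ _
  have hLgLG : Lg ≤ LG := le_max_left _ _
  have hLgC3 : Lg ≤ C3 := le_trans hLgLG (le_max_right C1 LG)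
  clear_value K E B C1 LG C3
  refine ⟨K * (C1 + C3) * T ^ 2 + (C3 + C1) * T, ?_⟩
  intro N hN φ ψ hφT hψd hmatch hmin s hs r hr hsr i
  rcases eq_or_lt_of_le hT with hT0 | hT0
  · exfalso
    rw [← hT0] at hs hr
    have h1 : s = 0 := le_antisymm hs.2 hs.1
    have h2 : r = 0 := le_antisymm hr.2 hr.1
    rw [h1, h2] at hsr; exact lt_irrefl _ hsr
  have hNR : (0 : ℝ) < N := Nat.cast_pos.2 hN
  set Δ : ℝ := T / N with hΔdef
  clear_value Δ
  have hΔ0 : 0 < Δ := by rw [hΔdef]; positivity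
  have htkN : T * (N : ℝ) / N = T := by field_simp
  have htk_succ : ∀ k : ℕ, T * ((k : ℝ) + 1) / N - T * k / N = Δ := by
    intro k; rw [hΔdef]; field_simp; ring
  have htk_nonneg : ∀ k : ℕ, 0 ≤ T * (k : ℝ) / N := by intro k; positivity
  have hup : ∀ m : ℕ, m ≤ N → T * (m : ℝ) / N ≤ T := by
    intro m hm
    rw [div_le_iff₀ hNR]
    exact mul_le_mul_of_nonneg_left (Nat.cast_le.2 hm) hT
  have hup' : ∀ k : ℕ, k < N → T * ((k : ℝ) + 1) / N ≤ T := by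
    intro k hk
    have := hup (k + 1) (Nat.succ_le_of_lt hk)
    push_cast at this
    exact this
  -- elementary sup facts
  have hsup_nonneg : ∀ w : Fin d → ℝ, 0 ≤ ⨆ j, |w j| := by
    intro w
    exact le_ciSup_of_le (Set.Finite.bddAbove (Set.finite_range _)) i0 (abs_nonneg _)
  -- derivative norm bound
  have hHnorm : ∀ i' t (w : Fin d → ℝ), |H i' t w| ≤ K * ‖w‖ + E := by
    intro i' t w
    have h1 := hH i' t w
    rw [my_sup_eq_norm w] at h1
    have h3 : (d : ℝ) * MQ * ‖w‖ ≤ K * ‖w‖ :=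
      mul_le_mul_of_nonneg_right hdK (norm_nonneg _)
    linarith
  have hψ_vec : ∀ k < N, ∀ t ∈ Icc (T * (k : ℝ) / N) (T * ((k : ℝ) + 1) / N),
      HasDerivAt (ψ k) (fun j => -(H j t (ψ k t))) t := by
    intro k hk t ht
    exact hasDerivAt_pi.2 fun j => hψd k hk t ht j
  have hψ_dbound : ∀ k < N, ∀ t ∈ Icc (T * (k : ℝ) / N) (T * ((k : ℝ) + 1) / N),
      ‖(fun j => -(H j t (ψ k t)))‖ ≤ K * ‖ψ k t‖ + E := by
    intro k hk t ht
    calc ‖(fun j => -(H j t (ψ k t)))‖ = ⨆ j, |-(H j t (ψ k t))| :=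
          (my_sup_eq_norm _).symm
      _ ≤ K * ‖ψ k t‖ + E := ciSup_le fun j => by
          rw [abs_neg]; exact hHnorm j t (ψ k t)
  have keyGron : ∀ k < N, ∀ δ' : ℝ, ‖ψ k (T * ((k : ℝ) + 1) / N)‖ ≤ δ' →
      ∀ t ∈ Icc (T * (k : ℝ) / N) (T * ((k : ℝ) + 1) / N),
      ‖ψ k t‖ ≤ (δ' + E * (T * ((k : ℝ) + 1) / N - t)) *
        Real.exp (K * (T * ((k : ℝ) + 1) / N - t)) := by
    intro k hk δ' hδ'
    exact my_gronwall_backward hK0 hE0 (hψ_vec k hk) (hψ_dbound k hk) hδ'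
  have harith : ∀ u v : ℝ, 0 ≤ u → 0 ≤ v →
      ((Mg + E * u) * Real.exp (K * u) + E * v) * Real.exp (K * v)
        ≤ (Mg + E * (u + v)) * Real.exp (K * (u + v)) := by
    intro u v hu hv
    have hadd : Real.exp (K * (u + v)) = Real.exp (K * u) * Real.exp (K * v) := by
      rw [← Real.exp_add]; ring_nf
    rw [hadd]
    have e1 : 1 ≤ Real.exp (K * u) := Real.one_le_exp (by positivity)
    have e2 : (0 : ℝ) < Real.exp (K * v) := Real.exp_pos _
    nlinarith [mul_nonneg (mul_nonneg hE0 hv) (sub_nonneg.2 e1)]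
  have hψ_grid_bound : ∀ k < N,
      (∀ j, |φ (T * ((k : ℝ) + 1) / N) j| ≤
        (Mg + E * (T - T * ((k : ℝ) + 1) / N)) * Real.exp (K * (T - T * ((k : ℝ) + 1) / N))) →
      ∀ t ∈ Icc (T * (k : ℝ) / N) (T * ((k : ℝ) + 1) / N),
      ‖ψ k t‖ ≤ (Mg + E * (T - t)) * Real.exp (K * (T - t)) := by
    intro k hk hb t ht
    have hb1T : T * ((k : ℝ) + 1) / N ≤ T := hup' k hk
    have hδ' : ‖ψ k (T * ((k : ℝ) + 1) / N)‖ ≤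
        (Mg + E * (T - T * ((k : ℝ) + 1) / N)) *
          Real.exp (K * (T - T * ((k : ℝ) + 1) / N)) := by
      have heq : ψ k (T * ((k : ℝ) + 1) / N) = φ (T * ((k : ℝ) + 1) / N) :=
        funext (hmatch k hk)
      rw [heq]
      refine (pi_norm_le_iff_of_nonneg ?_).2 fun j => ?_
      · exact mul_nonneg (by nlinarith [mul_nonneg hE0 (sub_nonneg.2 hb1T)])
          (Real.exp_pos _).le
      · rw [Real.norm_eq_abs]; exact hb j
    have h1 := keyGron k hk _ hδ' t ht
    refine h1.trans ?_
    have h2 := harith (T - T * ((k : ℝ) + 1) / N) (T * ((k : ℝ) + 1) / N - t)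
      (by linarith) (by linarith [ht.2])
    have h3 : T - T * ((k : ℝ) + 1) / N + (T * ((k : ℝ) + 1) / N - t) = T - t := by ring
    rw [h3] at h2
    exact h2
  have hcast : ∀ k : ℕ, ((k + 1 : ℕ) : ℝ) = (k : ℝ) + 1 := by intro k; push_cast; ring
  have hgrid : ∀ j : ℕ, ∀ k : ℕ, k + j = N → ∀ i',
      |φ (T * (k : ℝ) / N) i'| ≤
        (Mg + E * (T - T * (k : ℝ) / N)) * Real.exp (K * (T - T * (k : ℝ) / N)) := by
    intro j
    induction j with
    | zero =>
      intro k hk i'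
      have hkN : k = N := by omega
      subst hkN
      rw [htkN, hφT i']
      simp only [sub_self, mul_zero, Real.exp_zero, add_zero, mul_one]
      exact hMg T ⟨hT, le_refl T⟩ i'
    | succ n ih =>
      intro k hk i'
      have hkN : k < N := by omega
      have hIH := ih (k + 1) (by omega)
      rw [hcast k] at hIH
      have hΨ := hψ_grid_bound k hkN hIH (T * (k : ℝ) / N)
        ⟨le_refl _, by linarith [htk_succ k, hΔ0.le]⟩
      have hmin' := hmin k hkN (T * (k : ℝ) / N)
        ⟨le_refl _, by linarith [htk_succ k, hΔ0.le]⟩ i'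
      rw [hmin']
      have hexp1 : 1 ≤ Real.exp (K * (T - T * (k : ℝ) / N)) :=
        Real.one_le_exp (mul_nonneg hK0 (by linarith [hup k (le_of_lt hkN)]))
      refine le_trans (abs_min_le_max_abs_abs) (max_le ?_ ?_)
      · exact le_trans (my_abs_le_norm _ i') hΨ
      · have h1 := hMg (T * (k : ℝ) / N) ⟨htk_nonneg k, hup k (le_of_lt hkN)⟩ i'
        have h2 : 0 ≤ E * (T - T * (k : ℝ) / N) :=
          mul_nonneg hE0 (by linarith [hup k (le_of_lt hkN)])
        have hb' : 0 ≤ Mg + E * (T - T * (k : ℝ) / N) := by linarith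
        calc |g (T * (k : ℝ) / N) i'| ≤ Mg := h1
          _ = Mg * 1 := (mul_one _).symm
          _ ≤ (Mg + E * (T - T * (k : ℝ) / N)) *
              Real.exp (K * (T - T * (k : ℝ) / N)) :=
            mul_le_mul (by linarith) hexp1 zero_le_one hb'
  have hbnd_le_B : ∀ t : ℝ, 0 ≤ t → t ≤ T →
      (Mg + E * (T - t)) * Real.exp (K * (T - t)) ≤ B := by
    intro t h0 h1
    rw [hBdef]
    have e1 : Real.exp (K * (T - t)) ≤ Real.exp (K * T) :=
      Real.exp_le_exp.2 (by nlinarith)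
    have a1 : 0 ≤ Mg + E * (T - t) := by nlinarith [mul_nonneg hE0 (sub_nonneg.2 h1)]
    have a2 : (Mg + E * (T - t)) * Real.exp (K * (T - t)) ≤
        (Mg + E * (T - t)) * Real.exp (K * T) := mul_le_mul_of_nonneg_left e1 a1
    have a3 : (Mg + E * (T - t)) * Real.exp (K * T) ≤ (Mg + E * T) * Real.exp (K * T) :=
      mul_le_mul_of_nonneg_right (by nlinarith [mul_nonneg hE0 h0]) (Real.exp_pos _).le
    linarith
  have hΨB : ∀ k < N, ∀ t ∈ Icc (T * (k : ℝ) / N) (T * ((k : ℝ) + 1) / N),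
      ‖ψ k t‖ ≤ B := by
    intro k hk t ht
    have hIH := hgrid (N - (k + 1)) (k + 1) (by omega)
    rw [hcast k] at hIH
    have := hψ_grid_bound k hk hIH t ht
    exact this.trans (hbnd_le_B t (le_trans (htk_nonneg k) ht.1)
      (le_trans ht.2 (hup' k hk)))
  have hφB : ∀ k < N, ∀ t ∈ Icc (T * (k : ℝ) / N) (T * ((k : ℝ) + 1) / N),
      ∀ j, |φ t j| ≤ B := by
    intro k hk t ht j
    rw [hmin k hk t ht j]
    refine le_trans (abs_min_le_max_abs_abs) (max_le ?_ ?_)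
    · exact le_trans (my_abs_le_norm _ j) (hΨB k hk t ht)
    · have := hMg t ⟨le_trans (htk_nonneg k) ht.1, le_trans ht.2 (hup' k hk)⟩ j
      linarith
  have hHφ : ∀ k < N, ∀ t ∈ Icc (T * (k : ℝ) / N) (T * ((k : ℝ) + 1) / N),
      ∀ i', |H i' t (φ t)| ≤ C1 := by
    intro k hk t ht i'
    have h1 := hH i' t (φ t)
    have hsup : (⨆ j, |φ t j|) ≤ B := ciSup_le fun j => hφB k hk t ht j
    have h2 : (d : ℝ) * MQ * (⨆ j, |φ t j|) ≤ K * (⨆ j, |φ t j|) :=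
      mul_le_mul_of_nonneg_right hdK (hsup_nonneg _)
    have h3 : K * (⨆ j, |φ t j|) ≤ K * B := mul_le_mul_of_nonneg_left hsup hK0
    linarith [hC1def]
  have hHψ : ∀ k < N, ∀ t ∈ Icc (T * (k : ℝ) / N) (T * ((k : ℝ) + 1) / N),
      ∀ i', |H i' t (ψ k t)| ≤ C1 := by
    intro k hk t ht i'
    have h1 := hHnorm i' t (ψ k t)
    have h2 : K * ‖ψ k t‖ ≤ K * B := mul_le_mul_of_nonneg_left (hΨB k hk t ht) hK0
    linarith [hC1def]
  have hψd_norm : ∀ k < N, ∀ t ∈ Icc (T * (k : ℝ) / N) (T * ((k : ℝ) + 1) / N),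
      ‖(fun j => -(H j t (ψ k t)))‖ ≤ C1 := by
    intro k hk t ht
    calc ‖(fun j => -(H j t (ψ k t)))‖ = ⨆ j, |-(H j t (ψ k t))| :=
          (my_sup_eq_norm _).symm
      _ ≤ C1 := ciSup_le fun j => by rw [abs_neg]; exact hHψ k hk t ht j
  have hψLip : ∀ k < N, ∀ u ∈ Icc (T * (k : ℝ) / N) (T * ((k : ℝ) + 1) / N),
      ∀ v ∈ Icc (T * (k : ℝ) / N) (T * ((k : ℝ) + 1) / N),
      ‖ψ k v - ψ k u‖ ≤ C1 * |v - u| := by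
    intro k hk u hu v hv
    have := (convex_Icc (T * (k : ℝ) / N) (T * ((k : ℝ) + 1) / N)).norm_image_sub_le_of_norm_hasDerivWithin_le
      (fun x hx => (hψ_vec k hk x hx).hasDerivWithinAt)
      (fun x hx => hψd_norm k hk x hx) hu hv
    rwa [Real.norm_eq_abs] at this
  have hφLip : ∀ k < N, ∀ u ∈ Icc (T * (k : ℝ) / N) (T * ((k : ℝ) + 1) / N),
      ∀ v ∈ Icc (T * (k : ℝ) / N) (T * ((k : ℝ) + 1) / N),
      ∀ j, |φ v j - φ u j| ≤ C3 * |v - u| := by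
    intro k hk u hu v hv j
    rw [hmin k hk u hu j, hmin k hk v hv j]
    refine le_trans (abs_min_sub_min_le_max _ _ _ _) (max_le ?_ ?_)
    · have h1 : |ψ k v j - ψ k u j| ≤ ‖ψ k v - ψ k u‖ :=
        my_abs_le_norm (ψ k v - ψ k u) j
      have h2 := hψLip k hk u hu v hv
      have h3 : C1 * |v - u| ≤ C3 * |v - u| :=
        mul_le_mul_of_nonneg_right hC13 (abs_nonneg _)
      linarith
    · have h1 := hLg j v u
      have h2 : Lg * |v - u| ≤ C3 * |v - u| :=
        mul_le_mul_of_nonneg_right hLgC3 (abs_nonneg _)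
      linarith
  have hgap : ∀ k < N, ∀ t ∈ Icc (T * (k : ℝ) / N) (T * ((k : ℝ) + 1) / N),
      ∀ i', |H i' t (ψ k t) - H i' t (φ t)| ≤ K * ((C1 + C3) * Δ) := by
    intro k hk t ht i'
    have hb1 : T * ((k : ℝ) + 1) / N ∈ Icc (T * (k : ℝ) / N) (T * ((k : ℝ) + 1) / N) :=
      ⟨by linarith [htk_succ k, hΔ0.le], le_refl _⟩
    have hsup : (⨆ j, |ψ k t j - φ t j|) ≤ (C1 + C3) * Δ := by
      apply ciSup_le
      intro j
      have e3 : ψ k (T * ((k : ℝ) + 1) / N) j = φ (T * ((k : ℝ) + 1) / N) j := hmatch k hk j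
      have e1 : |ψ k (T * ((k : ℝ) + 1) / N) j - ψ k t j| ≤
          C1 * |T * ((k : ℝ) + 1) / N - t| :=
        le_trans (my_abs_le_norm (ψ k (T * ((k : ℝ) + 1) / N) - ψ k t) j)
          (hψLip k hk t ht _ hb1)
      have e2 : |φ (T * ((k : ℝ) + 1) / N) j - φ t j| ≤
          C3 * |T * ((k : ℝ) + 1) / N - t| := hφLip k hk t ht _ hb1 j
      have e4 : |T * ((k : ℝ) + 1) / N - t| ≤ Δ := by
        rw [abs_of_nonneg (by linarith [ht.2])]
        linarith [htk_succ k, ht.1]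
      have heq : ψ k t j - φ t j =
          -(ψ k (T * ((k : ℝ) + 1) / N) j - ψ k t j) +
            (φ (T * ((k : ℝ) + 1) / N) j - φ t j) := by rw [e3]; ring
      rw [heq]
      refine le_trans (abs_add_le _ _) ?_
      rw [abs_neg]
      have c1 : C1 * |T * ((k : ℝ) + 1) / N - t| ≤ C1 * Δ :=
        mul_le_mul_of_nonneg_left e4 hC10
      have c3 : C3 * |T * ((k : ℝ) + 1) / N - t| ≤ C3 * Δ :=
        mul_le_mul_of_nonneg_left e4 hC30
      nlinarith
    have h1 := hHlip i' t (ψ k t) (φ t)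
    have h2 : (d : ℝ) * MQ * (⨆ j, |ψ k t j - φ t j|) ≤
        K * (⨆ j, |ψ k t j - φ t j|) :=
      mul_le_mul_of_nonneg_right hdK (hsup_nonneg _)
    have h3 : K * (⨆ j, |ψ k t j - φ t j|) ≤ K * ((C1 + C3) * Δ) :=
      mul_le_mul_of_nonneg_left hsup hK0
    linarith
  -- continuity
  have hcψv : ∀ k < N, ContinuousOn (ψ k)
      (Icc (T * (k : ℝ) / N) (T * ((k : ℝ) + 1) / N)) := by
    intro k hk t ht
    exact (hψ_vec k hk t ht).continuousAt.continuousWithinAt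
  have hcψ : ∀ k < N, ∀ i', ContinuousOn (fun t => H i' t (ψ k t))
      (Icc (T * (k : ℝ) / N) (T * ((k : ℝ) + 1) / N)) := by
    intro k hk i'
    exact (hHc i').comp_continuousOn ((continuous_id.continuousOn).prodMk (hcψv k hk))
  have hgc : ∀ j, Continuous fun t => g t j := by
    intro j
    apply LipschitzWith.continuous (K := LG.toNNReal)
    apply LipschitzWith.of_dist_le_mul
    intro x y
    rw [Real.dist_eq, Real.dist_eq, Real.coe_toNNReal LG hLG0]
    exact (hLg j x y).trans (mul_le_mul_of_nonneg_right hLgLG (abs_nonneg _))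
  have hcφ : ∀ k < N, ContinuousOn φ
      (Icc (T * (k : ℝ) / N) (T * ((k : ℝ) + 1) / N)) := by
    intro k hk
    have h1 : ContinuousOn (fun t => fun j => min (ψ k t j) (g t j))
        (Icc (T * (k : ℝ) / N) (T * ((k : ℝ) + 1) / N)) := by
      refine continuousOn_pi' fun j => ?_
      apply ContinuousOn.inf
      · intro t ht
        exact (hψd k hk t ht j).continuousAt.continuousWithinAt
      · exact (hgc j).continuousOn
    exact ContinuousOn.congr h1 (fun t ht => funext fun j => hmin k hk t ht j)
  have hcHφ : ∀ k < N, ∀ i', ContinuousOn (fun t => H i' t (φ t))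
      (Icc (T * (k : ℝ) / N) (T * ((k : ℝ) + 1) / N)) := by
    intro k hk i'
    exact (hHc i').comp_continuousOn ((continuous_id.continuousOn).prodMk (hcφ k hk))
  set err : ℝ := K * ((C1 + C3) * Δ) * Δ with herrdef
  clear_value err
  have herr0 : 0 ≤ err := by
    rw [herrdef]
    have := hΔ0.le
    positivity
  -- key estimate on one interval, right endpoint
  have key6 : ∀ k < N, ∀ a ∈ Icc (T * (k : ℝ) / N) (T * ((k : ℝ) + 1) / N), ∀ i',
      IntervalIntegrable (fun t => H i' t (φ t)) MeasureTheory.volume a (T * ((k : ℝ) + 1) / N) ∧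
      φ (T * ((k : ℝ) + 1) / N) i' - φ a i' ≥
        -(∫ t in a..(T * ((k : ℝ) + 1) / N), H i' t (φ t)) - err := by
    intro k hk a ha i'
    have hab : a ≤ T * ((k : ℝ) + 1) / N := ha.2
    have hsub : Icc a (T * ((k : ℝ) + 1) / N) ⊆
        Icc (T * (k : ℝ) / N) (T * ((k : ℝ) + 1) / N) := Icc_subset_Icc ha.1 le_rfl
    have hIφ : IntervalIntegrable (fun t => H i' t (φ t)) MeasureTheory.volume a
        (T * ((k : ℝ) + 1) / N) := by
      apply ContinuousOn.intervalIntegrable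
      rw [uIcc_of_le hab]
      exact (hcHφ k hk i').mono hsub
    have hIψ : IntervalIntegrable (fun t => H i' t (ψ k t)) MeasureTheory.volume a
        (T * ((k : ℝ) + 1) / N) := by
      apply ContinuousOn.intervalIntegrable
      rw [uIcc_of_le hab]
      exact (hcψ k hk i').mono hsub
    refine ⟨hIφ, ?_⟩
    have hFTC : ∫ t in a..(T * ((k : ℝ) + 1) / N), -(H i' t (ψ k t)) =
        ψ k (T * ((k : ℝ) + 1) / N) i' - ψ k a i' := by
      apply intervalIntegral.integral_eq_sub_of_hasDerivAt
        (f := fun t => ψ k t i') (f' := fun t => -(H i' t (ψ k t)))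
      · intro t ht
        rw [uIcc_of_le hab] at ht
        exact hψd k hk t (hsub ht) i'
      · exact hIψ.neg
    rw [intervalIntegral.integral_neg] at hFTC
    have hdiff : |(∫ t in a..(T * ((k : ℝ) + 1) / N), H i' t (ψ k t)) -
        ∫ t in a..(T * ((k : ℝ) + 1) / N), H i' t (φ t)| ≤ err := by
      rw [← intervalIntegral.integral_sub hIψ hIφ]
      have hb : ∀ t ∈ Set.uIoc a (T * ((k : ℝ) + 1) / N),
          ‖H i' t (ψ k t) - H i' t (φ t)‖ ≤ K * ((C1 + C3) * Δ) := by
        intro t ht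
        rw [Set.uIoc_of_le hab] at ht
        rw [Real.norm_eq_abs]
        exact hgap k hk t (hsub ⟨ht.1.le, ht.2⟩) i'
      have h1 := intervalIntegral.norm_integral_le_of_norm_le_const hb
      rw [Real.norm_eq_abs] at h1
      refine h1.trans ?_
      have h2 : |T * ((k : ℝ) + 1) / N - a| ≤ Δ := by
        rw [abs_of_nonneg (by linarith)]
        linarith [htk_succ k, ha.1]
      rw [herrdef]
      exact mul_le_mul_of_nonneg_left h2 (by positivity)
    have hφa : φ a i' ≤ ψ k a i' := by
      rw [hmin k hk a ha i']; exact min_le_left _ _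
    have hφb : φ (T * ((k : ℝ) + 1) / N) i' = ψ k (T * ((k : ℝ) + 1) / N) i' :=
      (hmatch k hk i').symm
    have habs := abs_le.1 hdiff
    rw [hφb]
    linarith [habs.1]
  -- chained estimate up to a grid point
  have R : ∀ k : ℕ, k ≤ N → ∀ a ∈ Icc (0 : ℝ) T, a < T * (k : ℝ) / N →
      IntervalIntegrable (fun t => H i t (φ t)) MeasureTheory.volume a (T * (k : ℝ) / N) ∧
      φ (T * (k : ℝ) / N) i - φ a i ≥
        -(∫ t in a..(T * (k : ℝ) / N), H i t (φ t)) - (k : ℝ) * err := by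
    intro k
    induction k with
    | zero =>
      intro _ a ha hlt
      exfalso
      simp only [Nat.cast_zero, mul_zero, zero_div] at hlt
      linarith [ha.1]
    | succ n ih =>
      intro hn1 a ha hlt
      have hnN : n < N := by omega
      rw [hcast n] at hlt ⊢
      by_cases hcase : T * (n : ℝ) / N ≤ a
      · have h := key6 n hnN a ⟨hcase, hlt.le⟩ i
        refine ⟨h.1, ?_⟩
        have h1 : err ≤ ((n : ℝ) + 1) * err := by
          nlinarith [Nat.cast_nonneg (α := ℝ) n]
        linarith [h.2]
      · push_neg at hcase
        have h1 := ih (by omega) a ha hcase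
        have h2 := key6 n hnN (T * (n : ℝ) / N)
          ⟨le_refl _, by linarith [htk_succ n, hΔ0.le]⟩ i
        have hint : IntervalIntegrable (fun t => H i t (φ t)) MeasureTheory.volume a
            (T * ((n : ℝ) + 1) / N) := h1.1.trans h2.1
        refine ⟨hint, ?_⟩
        have hadd := intervalIntegral.integral_add_adjacent_intervals h1.1 h2.1
        linarith [h1.2, h2.2]
  -- locate r
  set q := Nat.findGreatest (fun k : ℕ => T * (k : ℝ) / N < r) N with hqdef
  clear_value q
  have hr0 : 0 < r := lt_of_le_of_lt hs.1 hsr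
  have hq1 : T * (q : ℝ) / N < r := by
    have h0 : (fun k : ℕ => T * (k : ℝ) / N < r) 0 := by simpa using hr0
    have := Nat.findGreatest_spec (P := fun k : ℕ => T * (k : ℝ) / N < r)
      (Nat.zero_le N) h0
    rwa [← hqdef] at this
  have hqN : q ≤ N := by rw [hqdef]; exact Nat.findGreatest_le N
  have hqltN : q < N := by
    rcases eq_or_lt_of_le hqN with h | h
    · exfalso; rw [h, htkN] at hq1; linarith [hr.2]
    · exact h
  have hq2 : r ≤ T * ((q : ℝ) + 1) / N := by
    by_contra hcon
    push_neg at hcon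
    have hgt : Nat.findGreatest (fun k : ℕ => T * (k : ℝ) / N < r) N < q + 1 := by
      rw [← hqdef]; omega
    have hng := Nat.findGreatest_is_greatest hgt (by omega : q + 1 ≤ N)
    apply hng
    push_cast
    linarith
  -- crude estimate on the last partial interval
  have crude : ∀ x : ℝ, T * (q : ℝ) / N ≤ x → x ≤ r →
      IntervalIntegrable (fun t => H i t (φ t)) MeasureTheory.volume x r ∧
      φ r i - φ x i ≥ -(∫ t in x..r, H i t (φ t)) - (C3 + C1) * Δ := by
    intro x hx1 hx2
    have hsub : Icc x r ⊆ Icc (T * (q : ℝ) / N) (T * ((q : ℝ) + 1) / N) :=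
      Icc_subset_Icc hx1 hq2
    have hxI : x ∈ Icc (T * (q : ℝ) / N) (T * ((q : ℝ) + 1) / N) :=
      ⟨hx1, le_trans hx2 hq2⟩
    have hrI : r ∈ Icc (T * (q : ℝ) / N) (T * ((q : ℝ) + 1) / N) := ⟨hq1.le, hq2⟩
    have hint : IntervalIntegrable (fun t => H i t (φ t)) MeasureTheory.volume x r := by
      apply ContinuousOn.intervalIntegrable
      rw [uIcc_of_le hx2]
      exact (hcHφ q hqltN i).mono hsub
    refine ⟨hint, ?_⟩
    have h1 : |φ r i - φ x i| ≤ C3 * |r - x| := hφLip q hqltN x hxI r hrI i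
    have h2 : |∫ t in x..r, H i t (φ t)| ≤ C1 * |r - x| := by
      have hb : ∀ t ∈ Set.uIoc x r, ‖H i t (φ t)‖ ≤ C1 := by
        intro t ht
        rw [Set.uIoc_of_le hx2] at ht
        rw [Real.norm_eq_abs]
        exact hHφ q hqltN t (hsub ⟨ht.1.le, ht.2⟩) i
      have := intervalIntegral.norm_integral_le_of_norm_le_const hb
      rwa [Real.norm_eq_abs] at this
    have h3 : |r - x| ≤ Δ := by
      rw [abs_of_nonneg (by linarith)]
      linarith [htk_succ q]
    have c3 : C3 * |r - x| ≤ C3 * Δ := mul_le_mul_of_nonneg_left h3 hC30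
    have c1 : C1 * |r - x| ≤ C1 * Δ := mul_le_mul_of_nonneg_left h3 hC10
    have ha1 := abs_le.1 h1
    have ha2 := abs_le.1 h2
    linarith [ha1.1, ha2.2]
  -- final assembly
  have hC4div : (N : ℝ) * err + (C3 + C1) * Δ ≤
      (K * (C1 + C3) * T ^ 2 + (C3 + C1) * T) / N := by
    apply le_of_eq
    rw [herrdef, hΔdef]
    field_simp
  have hNerr : 0 ≤ (N : ℝ) * err := mul_nonneg hNR.le herr0
  by_cases hcase : T * (q : ℝ) / N ≤ s
  · have h := crude s hcase hsr.le
    have hstep : (C3 + C1) * Δ ≤ (K * (C1 + C3) * T ^ 2 + (C3 + C1) * T) / (N : ℝ) := by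
      linarith
    linarith [h.2]
  · push_neg at hcase
    have h1 := R q hqN s hs hcase
    have h2 := crude (T * (q : ℝ) / N) le_rfl hq1.le
    have hadd := intervalIntegral.integral_add_adjacent_intervals h1.1 h2.1
    have hqleN : (q : ℝ) ≤ N := Nat.cast_le.2 hqN
    have herrq : (q : ℝ) * err ≤ (N : ℝ) * err :=
      mul_le_mul_of_nonneg_right hqleN herr0
    linarith [h1.2, h2.2, hC4div]
end
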